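/- Consider a general reaction system with algebraic chemistry ⟨M,R⟩, stoichiometric matrix N, and an admissible flux function v with respect to a threshold Φ ≥ 0. If x' is a fixed point (N v(x') = 0, x' ≥ 0) and Φ is smaller than every positive coordinate of x', then the abstraction φ(x') = { i ∈ M : x'_i > Φ } is a semi-organization, i.e., it is closed and self-maintaining. -/
import Mathlib


/-- A set `C` is closed: products of reactions whose reactants all lie in `C` lie in `C`. -/
def Closed {ι ρ : Type*} (re : ρ → Multiset ι × Multiset ι) (C : Set ι) : Prop :=
  ∀ r : ρ, (∀ a ∈ (re r).1, a ∈ C) → ∀ b ∈ (re r).2, b ∈ C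

/-- Molecule `k` is produced within `C`. -/
def Produced {ι ρ : Type*} [DecidableEq ι] (re : ρ → Multiset ι × Multiset ι)
    (C : Set ι) (k : ι) : Prop :=
  ∃ r : ρ, (∀ a ∈ (re r).1, a ∈ C) ∧ (re r).1.count k < (re r).2.count k

/-- Molecule `k` is used-up within `C`. -/
def UsedUp {ι ρ : Type*} [DecidableEq ι] (re : ρ → Multiset ι × Multiset ι)
    (C : Set ι) (k : ι) : Prop :=
  ∃ r : ρ, (∀ a ∈ (re r).1, a ∈ C) ∧ (re r).2.count k < (re r).1.count k

/-- `S` is self-maintaining. -/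
def SelfMaintaining {ι ρ : Type*} [DecidableEq ι] (re : ρ → Multiset ι × Multiset ι)
    (S : Set ι) : Prop :=
  ∀ k ∈ S, UsedUp re S k → Produced re S k

/-- A semi-organization is closed and self-maintaining. -/
def SemiOrganization {ι ρ : Type*} [DecidableEq ι] (re : ρ → Multiset ι × Multiset ι)
    (S : Set ι) : Prop :=
  Closed re S ∧ SelfMaintaining re S

/-- Entry of the stoichiometric matrix: products minus reactants multiplicity. -/
noncomputable def stoich {ι ρ : Type*} [DecidableEq ι] (re : ρ → Multiset ι × Multiset ι)
    (i : ι) (r : ρ) : ℝ :=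
  ((re r).2.count i : ℝ) - ((re r).1.count i : ℝ)

/-- `C` is mass-maintaining. -/
def MassMaintaining {ι ρ : Type*} [DecidableEq ι] [Fintype ρ]
    (re : ρ → Multiset ι × Multiset ι) (C : Set ι) : Prop :=
  ∃ v : ρ → ℝ,
    (∀ r : ρ, (∀ a ∈ (re r).1, a ∈ C) → 0 < v r) ∧
    (∀ r : ρ, ¬ (∀ a ∈ (re r).1, a ∈ C) → v r = 0) ∧
    (∀ i ∈ C, 0 ≤ ∑ r : ρ, stoich re i r * v r)

/-- An organization is closed and mass-maintaining. -/
def Organization {ι ρ : Type*} [DecidableEq ι] [Fintype ρ]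
    (re : ρ → Multiset ι × Multiset ι) (O : Set ι) : Prop :=
  Closed re O ∧ MassMaintaining re O

/-- The closure of `S`: the smallest closed set containing `S`. -/
def GCL {ι ρ : Type*} (re : ρ → Multiset ι × Multiset ι) (S : Set ι) : Set ι :=
  ⋂₀ {C : Set ι | Closed re C ∧ S ⊆ C}

/-- A catalytic flow system: every molecule has a dilution reaction `{k} → ∅`,
and no molecule is used-up by any other reaction. -/
def CatalyticFlow {ι ρ : Type*} [DecidableEq ι] (re : ρ → Multiset ι × Multiset ι) : Prop :=
  (∀ k : ι, ∃ r : ρ, re r = ({k}, (0 : Multiset ι))) ∧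
  (∀ r : ρ, (¬ ∃ k : ι, re r = ({k}, (0 : Multiset ι))) →
    ∀ k : ι, (re r).1.count k ≤ (re r).2.count k)

/-- A consistent reaction system with persistent molecules `P`. -/
def Consistent {ι ρ : Type*} [DecidableEq ι] (re : ρ → Multiset ι × Multiset ι)
    (P : Set ι) : Prop :=
  (∀ k : ι, k ∉ P → ∃ r : ρ, (re r).1 = {k} ∧ k ∉ (re r).2) ∧
  (∀ r : ρ, ∀ p ∈ P, (re r).1.count p ≤ (re r).2.count p)

/-- `S` is the largest self-maintaining subset of `C`. -/
def IsGSM {ι ρ : Type*} [DecidableEq ι] (re : ρ → Multiset ι × Multiset ι)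
    (C S : Set ι) : Prop :=
  S ⊆ C ∧ SelfMaintaining re S ∧ ∀ T : Set ι, T ⊆ C → SelfMaintaining re T → T ⊆ S

/-- `S` is the largest mass-maintaining subset of `C`. -/
def IsGMM {ι ρ : Type*} [DecidableEq ι] [Fintype ρ] (re : ρ → Multiset ι × Multiset ι)
    (C S : Set ι) : Prop :=
  S ⊆ C ∧ MassMaintaining re S ∧ ∀ T : Set ι, T ⊆ C → MassMaintaining re T → T ⊆ S

/-- An admissible flux function w.r.t. threshold `Φ`: nonnegative, and positive
exactly when all reactants are present (above threshold). -/
def Admissible {ι ρ : Type*} (re : ρ → Multiset ι × Multiset ι) (Φ : ℝ)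
    (v : (ι → ℝ) → ρ → ℝ) : Prop :=
  ∀ x : ι → ℝ, ∀ r : ρ, 0 ≤ v x r ∧ (0 < v x r ↔ ∀ a ∈ (re r).1, x a > Φ)

/-- at a fixed point of the dynamics, the abstraction
`φ(x') = {i | x'_i > Φ}` is a semi-organization (closed and self-maintaining). -/
theorem stmt16 {ι ρ : Type*} [Fintype ι] [Fintype ρ] [DecidableEq ι]
    (re : ρ → Multiset ι × Multiset ι) (Φ : ℝ) (hΦ : 0 ≤ Φ)
    (v : (ι → ℝ) → ρ → ℝ) (hv : Admissible re Φ v)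
    (x' : ι → ℝ) (hx : ∀ i : ι, 0 ≤ x' i)
    (hfix : ∀ i : ι, ∑ r : ρ, stoich re i r * v x' r = 0)
    (hthr : ∀ i : ι, 0 < x' i → Φ < x' i) :
    SemiOrganization re {i : ι | Φ < x' i} := by
  set S : Set ι := {i : ι | Φ < x' i} with hS
  constructor
  · -- Closed
    intro r hr b hb
    by_contra hbS
    have hvpos : 0 < v x' r := (hv x' r).2.mpr hr
    -- every term in the sum for b is nonneg, and term r is positive
    have hterms : ∀ s : ρ, 0 ≤ stoich re b s * v x' s := by
      intro s
      rcases lt_or_eq_of_le (hv x' s).1 with hs | hs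
      · have hre : ∀ a ∈ (re s).1, Φ < x' a := (hv x' s).2.mp hs
        have hc1 : (re s).1.count b = 0 := by
          by_contra hc
          exact hbS (hre b (Multiset.count_pos.mp (Nat.pos_of_ne_zero hc)))
        have : (0 : ℝ) ≤ stoich re b s := by
          simp [stoich, hc1]
        exact mul_nonneg this (le_of_lt hs)
      · simp [← hs]
    have hrpos : 0 < stoich re b r * v x' r := by
      have hc1 : (re r).1.count b = 0 := by
        by_contra hc
        exact hbS (hr b (Multiset.count_pos.mp (Nat.pos_of_ne_zero hc)))
      have hc2 : 0 < (re r).2.count b := Multiset.count_pos.mpr hb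
      have : (0 : ℝ) < stoich re b r := by
        simp only [stoich, hc1, Nat.cast_zero, sub_zero]
        exact_mod_cast hc2
      exact mul_pos this hvpos
    have : 0 < ∑ s : ρ, stoich re b s * v x' s :=
      Finset.sum_pos' (fun s _ => hterms s) ⟨r, Finset.mem_univ r, hrpos⟩
    exact absurd (hfix b) (ne_of_gt this)
  · -- SelfMaintaining
    intro k _ hused
    obtain ⟨r0, hr0, hcnt⟩ := hused
    by_contra hnp
    have hterms : ∀ s : ρ, stoich re k s * v x' s ≤ 0 := by
      intro s
      rcases lt_or_eq_of_le (hv x' s).1 with hs | hs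
      · have hre : ∀ a ∈ (re s).1, a ∈ S := fun a ha => (hv x' s).2.mp hs a ha
        have hle : (re s).2.count k ≤ (re s).1.count k := by
          by_contra hc
          exact hnp ⟨s, hre, lt_of_not_ge hc⟩
        have : stoich re k s ≤ 0 := by
          simp only [stoich, sub_nonpos]
          exact_mod_cast hle
        exact mul_nonpos_of_nonpos_of_nonneg this (le_of_lt hs)
      · simp [← hs]
    have hr0neg : stoich re k r0 * v x' r0 < 0 := by
      have hvpos : 0 < v x' r0 := (hv x' r0).2.mpr fun a ha => hr0 a ha
      have : stoich re k r0 < 0 := by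
        simp only [stoich, sub_neg]
        exact_mod_cast hcnt
      exact mul_neg_of_neg_of_pos this hvpos
    have : ∑ s : ρ, stoich re k s * v x' s < 0 := by
      have := Finset.sum_pos' (f := fun s => -(stoich re k s * v x' s))
        (fun s _ => neg_nonneg.mpr (hterms s))
        ⟨r0, Finset.mem_univ r0, neg_pos.mpr hr0neg⟩
      simpa using this
    exact absurd (hfix k) (ne_of_lt this)
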